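/- Let X₀ ⊆ X be such that ρ = R|_{X₀}/M > 1. Then the X₀-restricted spectral gap of the lazy random-walk Metropolis–Hastings chain satisfies Gap_{X₀}(P₀^lazy) ≥ 1/(c(ρ)·M). -/

import Mathlib

open Finset

noncomputable section

variable {X : Type*}

/-- Total variation distance between two (finitely supported) distributions. -/
def tvDist [Fintype X] (ζ μ : X → ℝ) : ℝ :=
  ⨆ A : Finset X, |∑ a ∈ A, ζ a - ∑ a ∈ A, μ a|

/-- The lazy version `(P + I)/2` of a transition matrix. -/
def lazyM [Fintype X] [DecidableEq X] (P : Matrix X X ℝ) : Matrix X X ℝ :=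
  (2 : ℝ)⁻¹ • (P + 1)

/-- Mixing time started from `x`. -/
def mixTimeFrom [Fintype X] [DecidableEq X] (P : Matrix X X ℝ) (μ : X → ℝ) (ε : ℝ) (x : X) : ℕ :=
  sInf {t : ℕ | tvDist (fun y => (P ^ t) x y) μ ≤ ε}

/-- Worst-case mixing time. -/
def mixTime [Fintype X] [DecidableEq X] (P : Matrix X X ℝ) (μ : X → ℝ) (ε : ℝ) : ℕ :=
  Finset.univ.sup (mixTimeFrom P μ ε)

/-- Variational spectral gap of a reversible transition matrix. -/
def specGap [Fintype X] (P : Matrix X X ℝ) (μ : X → ℝ) : ℝ :=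
  sInf { r : ℝ | ∃ f : X → ℝ,
    (2⁻¹ * ∑ x, ∑ y, (f x - f y) ^ 2 * μ x * μ y) ≠ 0 ∧
    r = (2⁻¹ * ∑ x, ∑ y, (f x - f y) ^ 2 * P x y * μ x) /
        (2⁻¹ * ∑ x, ∑ y, (f x - f y) ^ 2 * μ x * μ y) }

/-- Restricted spectral gap on `X0`. -/
def restGap [Fintype X] (P : Matrix X X ℝ) (μ : X → ℝ) (X0 : Finset X) : ℝ :=
  sInf { r : ℝ | ∃ f : X → ℝ,
    0 < (∑ x ∈ X0, ∑ y ∈ X0, (f x - f y) ^ 2 * μ x * μ y) ∧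
    r = (∑ x ∈ X0, ∑ y ∈ X0, (f x - f y) ^ 2 * P x y * μ x) /
        (∑ x ∈ X0, ∑ y ∈ X0, (f x - f y) ^ 2 * μ x * μ y) }

/-- `c(ρ) = 4 / (1 - ρ^{-1/2})³`. -/
def cFun (ρ : ℝ) : ℝ := 4 / (1 - ρ ^ (-(2 : ℝ)⁻¹)) ^ 3

/-- Maximum neighborhood size. -/
def Mmax [Fintype X] (N : X → Finset X) : ℕ := Finset.univ.sup fun x => (N x).card

/-- Minimal value of `π`. -/
def piMin [Fintype X] [Nonempty X] (π : X → ℝ) : ℝ := ⨅ x, π x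

/-- `R = min_{x ≠ x*} max_{y ∈ N(x)} π(y)/π(x)`. -/
def Rval [Fintype X] (π : X → ℝ) (N : X → Finset X) (xstar : X) : ℝ :=
  sInf ((fun x => sSup ((fun y => π y / π x) '' (N x : Set X))) '' {x | x ≠ xstar})

/-- Restricted `R|_{X₀}`. -/
def RvalRes [Fintype X] [DecidableEq X] (π : X → ℝ) (N : X → Finset X) (X0 : Finset X)
    (x0star : X) : ℝ :=
  sInf ((fun x => sSup ((fun y => π y / π x) '' ((N x ∩ X0 : Finset X) : Set X))) ''
    {x | x ∈ X0 ∧ x ≠ x0star})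

/-- Random walk Metropolis–Hastings transition matrix. -/
def rwMH [Fintype X] [DecidableEq X] (π : X → ℝ) (N : X → Finset X) : Matrix X X ℝ :=
  Matrix.of fun x y =>
    if y ∈ N x then min (((N x).card : ℝ))⁻¹ (π y / (π x * ((N y).card : ℝ)))
    else if y = x then
      1 - ∑ z ∈ N x, min (((N x).card : ℝ))⁻¹ (π z / (π x * ((N z).card : ℝ)))
    else 0

/-- The clipping function `clip(u, ℓ, L)`. -/
def clip (l L u : ℝ) : ℝ := if u < l then l else if u ≤ L then u else L

/-- Normalizing constant of the informed proposal. -/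
def Zh [Fintype X] (π : X → ℝ) (N : X → Finset X) (l L : ℝ) (x : X) : ℝ :=
  ∑ y ∈ N x, clip l L (π y / π x)

/-- Informed proposal kernel. -/
def Kh [Fintype X] [DecidableEq X] (π : X → ℝ) (N : X → Finset X) (l L : ℝ) (x y : X) : ℝ :=
  (if y ∈ N x then clip l L (π y / π x) else 0) / Zh π N l L x

/-- Informed Metropolis–Hastings transition matrix. -/
def infMH [Fintype X] [DecidableEq X] (π : X → ℝ) (N : X → Finset X) (l L : ℝ) :
    Matrix X X ℝ :=
  Matrix.of fun x y =>
    if y = x then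
      1 - ∑ z ∈ Finset.univ.erase x,
        Kh π N l L x z * min 1 ((π z * Kh π N l L z x) / (π x * Kh π N l L x z))
    else Kh π N l L x y * min 1 ((π y * Kh π N l L y x) / (π x * Kh π N l L x y))

/-- List of consecutive edges of a list of vertices. -/
def edgeList : List X → List (X × X)
  | a :: b :: rest => (a, b) :: edgeList (b :: rest)
  | _ => []

/-- `γ` is a path from `x` to `y` (x ≠ y) with all edges in `E` and no repeated edge. -/
def IsPathIn (E : Finset (X × X)) (x y : X) (γ : List X) : Prop :=
  x ≠ y ∧ γ.head? = some x ∧ γ.getLast? = some y ∧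
    (∀ e ∈ edgeList γ, e ∈ E) ∧ (edgeList γ).Nodup

/-- `Φ(x,y) = Σ_{γ ∈ Γ_E(x,y)} φ(γ)`. -/
def flowBetween (E : Finset (X × X)) (φ : List X → ℝ) (x y : X) : ℝ :=
  ∑' γ : {γ : List X // IsPathIn E x y γ}, φ γ

/-- Flow from `x` to `y` through the edge `e`. -/
def flowBetweenThrough (E : Finset (X × X)) (φ : List X → ℝ) (x y : X) (e : X × X) : ℝ :=
  ∑' γ : {γ : List X // IsPathIn E x y γ ∧ e ∈ edgeList γ}, φ γ

/-- `w`-length of a path. -/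
def wlen (w : X × X → ℝ) (γ : List X) : ℝ := ((edgeList γ).map w).sum

/-- Congestion `A(E, w, φ)`. -/
def congestion [Fintype X] (π : X → ℝ) (P : Matrix X X ℝ) (E : Finset (X × X))
    (w : X × X → ℝ) (φ : List X → ℝ) : ℝ :=
  ⨆ e ∈ E,
    (∑' γ : {γ : List X // (∃ x y, IsPathIn E x y γ) ∧ e ∈ edgeList γ}, wlen w γ * φ γ) /
      (π e.1 * P e.1 e.2 * w e)

/-- `N_S(x) = {x' ∈ N(x) : π(x')/π(x) ≥ S}`. -/
def NS [Fintype X] (π : X → ℝ) (N : X → Finset X) (S : ℝ) (x : X) : Finset X :=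
  (N x).filter fun y => S ≤ π y / π x

/-- Edge set `E_S`. -/
def ES [Fintype X] [DecidableEq X] (π : X → ℝ) (N : X → Finset X) (S : ℝ) : Finset (X × X) :=
  Finset.univ.filter fun e => e.1 ∈ NS π N S e.2 ∨ e.2 ∈ NS π N S e.1

/-- Restricted `N|^S_{X₀}(x)`. -/
def NSres [Fintype X] [DecidableEq X] (π : X → ℝ) (N : X → Finset X) (X0 : Finset X) (S : ℝ)
    (x : X) : Finset X :=
  ((N x) ∩ X0).filter fun y => S ≤ π y / π x

/-- Restricted edge set `E_S⁰`. -/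
def ESres [Fintype X] [DecidableEq X] (π : X → ℝ) (N : X → Finset X) (X0 : Finset X)
    (S : ℝ) : Finset (X × X) :=
  Finset.univ.filter fun e =>
    (e.1 ∈ X0 ∧ e.2 ∈ X0) ∧ (e.1 ∈ NSres π N X0 S e.2 ∨ e.2 ∈ NSres π N X0 S e.1)

end

set_option maxHeartbeats 1000000 in
theorem stmt18 {X : Type*} [Fintype X] [DecidableEq X] [Nonempty X]
    (π : X → ℝ) (hπpos : ∀ x, 0 < π x) (hπsum : ∑ x, π x = 1)
    (N : X → Finset X)
    (hNirr : ∀ x, x ∉ N x)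
    (hNsym : ∀ x y, y ∈ N x → x ∈ N y)
    (hNconn : ∀ x y : X, Relation.ReflTransGen (fun a b => b ∈ N a) x y)
    (X0 : Finset X)
    (x0star : X) (hx0star : x0star ∈ X0) (hx0max : ∀ x ∈ X0, π x ≤ π x0star)
    (ρ : ℝ) (hρdef : ρ = RvalRes π N X0 x0star / (Mmax N : ℝ)) (hρ : 1 < ρ) :
    1 / (cFun ρ * (Mmax N : ℝ)) ≤ restGap (lazyM (rwMH π N)) π X0 := by
  classical
  have hρ0 : (0:ℝ) < ρ := lt_trans one_pos hρ
  set M : ℕ := Mmax N with hMdef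
  have hMpos : 0 < (M : ℝ) := by
    rcases eq_or_lt_of_le (Nat.cast_nonneg M : (0:ℝ) ≤ M) with h | h
    · exfalso; rw [hρdef, ← h, div_zero] at hρ; norm_num at hρ
    · exact h
  have hM1 : (1:ℝ) ≤ M := by
    have : (1:ℕ) ≤ M := Nat.one_le_iff_ne_zero.mpr (by exact_mod_cast hMpos.ne')
    exact_mod_cast this
  have hRval : RvalRes π N X0 x0star = ρ * M := by
    rw [hρdef, div_mul_cancel₀ _ hMpos.ne']
  have hκ1 : (1:ℝ) < ρ * M := by nlinarith
  have hNM : ∀ z : X, (N z).card ≤ M := fun z =>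
    Finset.le_sup (f := fun x => (N x).card) (Finset.mem_univ z)
  -- there is a point of X0 different from x0star
  have hSne : ∃ x1, x1 ∈ X0 ∧ x1 ≠ x0star := by
    by_contra h
    push_neg at h
    have hempty : {x : X | x ∈ X0 ∧ x ≠ x0star} = ∅ := by
      ext x; simp only [Set.mem_setOf_eq, Set.mem_empty_iff_false, iff_false, not_and]
      intro hx; simpa using h x hx
    have h0 : RvalRes π N X0 x0star = 0 := by
      rw [RvalRes, hempty, Set.image_empty, Real.sInf_empty]
    rw [h0] at hRval; nlinarith
  -- successor step
  have hsucc : ∀ x ∈ X0, x ≠ x0star → ∃ y, y ∈ N x ∧ y ∈ X0 ∧ ρ * M * π x ≤ π y := by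
    intro x hx hxne
    set J : Set ℝ := (fun y => π y / π x) '' ((N x ∩ X0 : Finset X) : Set X) with hJ
    have hJfin : J.Finite := Set.Finite.image _ (Finset.finite_toSet _)
    have hmem : sSup J ∈ (fun x => sSup ((fun y => π y / π x) '' ((N x ∩ X0 : Finset X) : Set X))) ''
        {x : X | x ∈ X0 ∧ x ≠ x0star} := ⟨x, ⟨hx, hxne⟩, rfl⟩
    have hIfin : ((fun x => sSup ((fun y => π y / π x) '' ((N x ∩ X0 : Finset X) : Set X))) ''
        {x : X | x ∈ X0 ∧ x ≠ x0star}).Finite := Set.Finite.image _ (Set.toFinite _)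
    have hle : ρ * M ≤ sSup J := by
      rw [← hRval, RvalRes]
      exact csInf_le hIfin.bddBelow hmem
    have hpos : 0 < sSup J := lt_of_lt_of_le (by nlinarith) hle
    have hJne : J.Nonempty := by
      by_contra h
      rw [Set.not_nonempty_iff_eq_empty] at h
      rw [h, Real.sSup_empty] at hpos; exact lt_irrefl _ hpos
    obtain ⟨y, hy, hyeq⟩ := hJne.csSup_mem hJfin
    rw [Finset.coe_inter, Set.mem_inter_iff, Finset.mem_coe, Finset.mem_coe] at hy
    refine ⟨y, hy.1, hy.2, ?_⟩
    rw [← hyeq] at hle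
    exact (le_div_iff₀ (hπpos x)).mp hle
  -- choose a successor function g
  have hgex : ∀ x : X, ∃ y : X, (x ∈ X0 ∧ x ≠ x0star) → (y ∈ N x ∧ y ∈ X0 ∧ ρ * M * π x ≤ π y) := by
    intro x
    by_cases h : x ∈ X0 ∧ x ≠ x0star
    · obtain ⟨y, hy⟩ := hsucc x h.1 h.2; exact ⟨y, fun _ => hy⟩
    · exact ⟨x, fun hc => absurd hc h⟩
  choose g hg using hgex
  -- termination
  have hterm : ∀ x ∈ X0, ∃ k : ℕ, g^[k] x = x0star := by
    intro x hx
    have H : ∀ n : ℕ, ∀ x ∈ X0, (X0.filter (fun y => π x < π y)).card ≤ n →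
        ∃ k : ℕ, g^[k] x = x0star := by
      intro n
      induction n with
      | zero =>
        intro x hx hcard
        by_cases hxe : x = x0star
        · exact ⟨0, by simp [hxe]⟩
        · exfalso
          obtain ⟨h1, h2, h3⟩ := hg x ⟨hx, hxe⟩
          have hmem : g x ∈ X0.filter (fun y => π x < π y) :=
            Finset.mem_filter.mpr ⟨h2, by nlinarith [hπpos x]⟩
          have := Finset.card_pos.mpr ⟨_, hmem⟩
          omega
      | succ n ih =>
        intro x hx hcard
        by_cases hxe : x = x0star
        · exact ⟨0, by simp [hxe]⟩
        · obtain ⟨h1, h2, h3⟩ := hg x ⟨hx, hxe⟩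
          have hlt : π x < π (g x) := by nlinarith [hπpos x]
          have hsubset : X0.filter (fun y => π (g x) < π y) ⊆ X0.filter (fun y => π x < π y) := by
            intro y hy
            rcases Finset.mem_filter.mp hy with ⟨hy1, hy2⟩
            exact Finset.mem_filter.mpr ⟨hy1, lt_trans hlt hy2⟩
          have hsub : X0.filter (fun y => π (g x) < π y) ⊂ X0.filter (fun y => π x < π y) :=
            (Finset.ssubset_iff_of_subset hsubset).mpr
              ⟨g x, Finset.mem_filter.mpr ⟨h2, hlt⟩, by simp⟩
          have hcard' : (X0.filter (fun y => π (g x) < π y)).card ≤ n := by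
            have := Finset.card_lt_card hsub; omega
          obtain ⟨k, hk⟩ := ih (g x) h2 hcard'
          exact ⟨k + 1, by rw [Function.iterate_succ_apply]; exact hk⟩
    exact H _ x hx le_rfl
  -- minimal hitting time
  have hterm' : ∀ x : X, ∃ k : ℕ, x ∈ X0 →
      (g^[k] x = x0star ∧ ∀ i < k, g^[i] x ≠ x0star) := by
    intro x
    by_cases hx : x ∈ X0
    · obtain ⟨k, hk⟩ := hterm x hx
      have hex : ∃ k, g^[k] x = x0star := ⟨k, hk⟩
      exact ⟨Nat.find hex, fun _ => ⟨Nat.find_spec hex, fun i hi => Nat.find_min hex hi⟩⟩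
    · exact ⟨0, fun hc => absurd hc hx⟩
  choose kk hkk using hterm'
  have hk0 : ∀ x ∈ X0, g^[kk x] x = x0star := fun x hx => (hkk x hx).1
  have hkmin : ∀ x ∈ X0, ∀ i < kk x, g^[i] x ≠ x0star := fun x hx => (hkk x hx).2
  -- path stays in X0
  have hpath : ∀ x ∈ X0, ∀ i, i ≤ kk x → g^[i] x ∈ X0 := by
    intro x hx i
    induction i with
    | zero => intro _; simpa using hx
    | succ i ih =>
      intro hle
      have hi : i < kk x := lt_of_lt_of_le (Nat.lt_succ_self i) hle
      rw [Function.iterate_succ_apply']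
      exact (hg _ ⟨ih hi.le, hkmin x hx i hi⟩).2.1
  -- growth along the path
  have hgrow : ∀ x ∈ X0, ∀ i, i ≤ kk x → (ρ * M)^i * π x ≤ π (g^[i] x) := by
    intro x hx i
    induction i with
    | zero => intro _; simp
    | succ i ih =>
      intro hle
      have hi : i < kk x := lt_of_lt_of_le (Nat.lt_succ_self i) hle
      have h3 := (hg (g^[i] x) ⟨hpath x hx i hi.le, hkmin x hx i hi⟩).2.2
      rw [Function.iterate_succ_apply', pow_succ]
      have hpw : (0:ℝ) < (ρ * M)^i := by positivity
      nlinarith [ih hi.le, hπpos (g^[i] x), hπpos x]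
  -- π strictly increases along the path
  have hlt : ∀ x ∈ X0, ∀ j, j ≤ kk x → ∀ i, i < j → π (g^[i] x) < π (g^[j] x) := by
    intro x hx j
    induction j with
    | zero => intro _ i hi; exact absurd hi (Nat.not_lt_zero i)
    | succ j ih =>
      intro hj i hi
      have hjk : j < kk x := lt_of_lt_of_le (Nat.lt_succ_self j) hj
      have hstep : π (g^[j] x) < π (g^[Nat.succ j] x) := by
        have h3 := (hg (g^[j] x) ⟨hpath x hx j hjk.le, hkmin x hx j hjk⟩).2.2
        rw [Function.iterate_succ_apply']
        nlinarith [hπpos (g^[j] x)]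
      rcases Nat.lt_succ_iff_lt_or_eq.mp hi with h | h
      · exact lt_trans (ih hjk.le i h) hstep
      · rw [h]; exact hstep
  -- bound on hitting times
  set K := Fintype.card X with hKdef
  have hkK : ∀ x ∈ X0, kk x < K := by
    intro x hx
    have hinj : Set.InjOn (fun i => g^[i] x) (Finset.range (kk x + 1) : Finset ℕ) := by
      intro i hi j hj hij
      simp only [Finset.coe_range, Set.mem_Iio] at hi hj
      by_contra hne
      have hij' : g^[i] x = g^[j] x := hij
      rcases lt_or_gt_of_ne hne with h | h
      · have := hlt x hx j (by omega) i h; rw [hij'] at this; exact lt_irrefl _ this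
      · have := hlt x hx i (by omega) j h; rw [hij'] at this; exact lt_irrefl _ this
    have := Finset.card_le_card_of_injOn (fun i => g^[i] x)
      (fun i _ => Finset.mem_univ _) hinj
    rw [Finset.card_range, Finset.card_univ] at this
    rw [hKdef]; omega
  -- the rate r
  set r : ℝ := ρ ^ (-(2:ℝ)⁻¹) with hrdef
  have hr0 : 0 < r := Real.rpow_pos_of_pos hρ0 _
  have hr1 : r < 1 := Real.rpow_lt_one_of_one_lt_of_neg hρ (by norm_num)
  have h1r : 0 < 1 - r := by linarith
  have hrsq : r * r = ρ⁻¹ := by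
    rw [hrdef, ← Real.rpow_add hρ0]
    norm_num [Real.rpow_neg_one]
  have hgeom : ∀ n : ℕ, ∑ i ∈ Finset.range n, r^i ≤ (1 - r)⁻¹ := by
    intro n
    rw [geom_sum_eq (by linarith : r ≠ 1) n]
    rw [show (r^n - 1)/(r - 1) = (1 - r^n)/(1 - r) by rw [← neg_div_neg_eq]; ring_nf]
    rw [inv_eq_one_div]
    exact div_le_div₀ zero_le_one (by nlinarith [pow_nonneg hr0.le n]) h1r le_rfl
  -- nonnegativity of the transition matrices
  have hP0 : ∀ x y, 0 ≤ rwMH π N x y := by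
    intro x y
    rw [rwMH, Matrix.of_apply]
    split_ifs with h1 h2
    · refine le_min (inv_nonneg.mpr (Nat.cast_nonneg _)) ?_
      have := hπpos x; have := hπpos y; exact div_nonneg (hπpos y).le (mul_nonneg (hπpos x).le (Nat.cast_nonneg _))
    · have hsum : ∑ z ∈ N x, min ((((N x).card : ℝ))⁻¹) (π z / (π x * ((N z).card : ℝ)))
          ≤ ∑ _z ∈ N x, (((N x).card : ℝ))⁻¹ :=
        Finset.sum_le_sum (fun z _ => min_le_left _ _)
      have heq : ∑ _z ∈ N x, (((N x).card : ℝ))⁻¹ = ((N x).card : ℝ) * (((N x).card : ℝ))⁻¹ := by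
        rw [Finset.sum_const, nsmul_eq_mul]
      have hle1 : ((N x).card : ℝ) * (((N x).card : ℝ))⁻¹ ≤ 1 := by
        rcases Nat.eq_zero_or_pos (N x).card with h | h
        · simp [h]
        · rw [mul_inv_cancel₀ (by exact_mod_cast h.ne' : ((N x).card : ℝ) ≠ 0)]
      linarith [hsum.trans (heq ▸ hle1)]
    · exact le_refl 0
  have hlznn : ∀ x y, 0 ≤ lazyM (rwMH π N) x y := by
    intro x y
    rw [lazyM, Matrix.smul_apply, Matrix.add_apply, Matrix.one_apply, smul_eq_mul]
    have := hP0 x y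
    split_ifs <;> nlinarith
  -- lower bound on the edge (z, g z)
  have hedge : ∀ z ∈ X0, z ≠ x0star → (2 * (M:ℝ))⁻¹ ≤ lazyM (rwMH π N) z (g z) := by
    intro z hz hne
    obtain ⟨h1, h2, h3⟩ := hg z ⟨hz, hne⟩
    have hzgz : z ≠ g z := by
      intro h; rw [← h] at h3; nlinarith [hπpos z]
    have hNz1 : 0 < (N z).card := Finset.card_pos.mpr ⟨g z, h1⟩
    have hNzM : ((N z).card : ℝ) ≤ M := by exact_mod_cast hNM z
    have hNgz1 : 0 < (N (g z)).card := Finset.card_pos.mpr ⟨z, hNsym _ _ h1⟩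
    have hNgzM : ((N (g z)).card : ℝ) ≤ M := by exact_mod_cast hNM (g z)
    rw [lazyM, Matrix.smul_apply, Matrix.add_apply, Matrix.one_apply_ne hzgz, smul_eq_mul,
      add_zero, rwMH, Matrix.of_apply, if_pos h1]
    have hmin : (M:ℝ)⁻¹ ≤ min ((((N z).card : ℝ))⁻¹) (π (g z) / (π z * ((N (g z)).card : ℝ))) := by
      refine le_min ?_ ?_
      · exact inv_anti₀ (by exact_mod_cast hNz1) hNzM
      · have hcgz : (0:ℝ) < ((N (g z)).card : ℝ) := by exact_mod_cast hNgz1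
        have hb : (0:ℝ) < π z * ((N (g z)).card : ℝ) := mul_pos (hπpos z) hcgz
        rw [le_div_iff₀ hb]
        have e1 : (M:ℝ)⁻¹ * (π z * M) = π z := by field_simp
        have e2 : 0 ≤ (M:ℝ)⁻¹ * π z * ((M:ℝ) - ((N (g z)).card : ℝ)) :=
          mul_nonneg (mul_nonneg (inv_nonneg.mpr hMpos.le) (hπpos z).le) (by linarith)
        nlinarith [hπpos z, h3, hκ1]
    rw [show ((2:ℝ) * M)⁻¹ = 2⁻¹ * (M:ℝ)⁻¹ by rw [mul_inv]]
    linarith [hmin]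
  -- scalar identity
  have hscal : ∀ i : ℕ, r⁻¹^i * ((M:ℝ)^i * ((ρ*M)⁻¹)^i) = r^i := by
    intro i
    rw [← mul_pow, ← mul_pow]
    congr 1
    have e : (M:ℝ) * (ρ*M)⁻¹ = ρ⁻¹ := by
      rw [mul_inv, show (M:ℝ) * (ρ⁻¹ * (M:ℝ)⁻¹) = ρ⁻¹ * ((M:ℝ) * (M:ℝ)⁻¹) by ring,
        mul_inv_cancel₀ hMpos.ne', mul_one]
    rw [e, ← hrsq, ← mul_assoc, inv_mul_cancel₀ hr0.ne', one_mul]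
  -- preimage counting
  have hcard : ∀ i : ℕ, ∀ z : X,
      (X0.filter (fun x => i < kk x ∧ g^[i] x = z)).card ≤ M^i := by
    intro i
    induction i with
    | zero =>
      intro z
      have hsub : X0.filter (fun x => 0 < kk x ∧ g^[0] x = z) ⊆ {z} := by
        intro x hx
        rcases Finset.mem_filter.mp hx with ⟨_, _, h⟩
        simp only [Function.iterate_zero_apply] at h
        exact Finset.mem_singleton.mpr h
      simpa using Finset.card_le_card hsub
    | succ i ih =>
      intro z
      have hsub : X0.filter (fun x => i+1 < kk x ∧ g^[i+1] x = z) ⊆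
          (N z).biUnion (fun w => X0.filter (fun x => i < kk x ∧ g^[i] x = w)) := by
        intro x hx
        rcases Finset.mem_filter.mp hx with ⟨hxX0, hik, hgz⟩
        have hik' : i < kk x := by omega
        have hw0 : g^[i] x ∈ X0 := hpath x hxX0 i hik'.le
        have hwne : g^[i] x ≠ x0star := hkmin x hxX0 i hik'
        have hgw : g (g^[i] x) = z := (Function.iterate_succ_apply' g i x).symm.trans hgz
        have hzN : z ∈ N (g^[i] x) := hgw ▸ (hg _ ⟨hw0, hwne⟩).1
        exact Finset.mem_biUnion.mpr ⟨g^[i] x, hNsym _ _ hzN,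
          Finset.mem_filter.mpr ⟨hxX0, hik', rfl⟩⟩
      calc (X0.filter (fun x => i+1 < kk x ∧ g^[i+1] x = z)).card
          ≤ ∑ w ∈ N z, (X0.filter (fun x => i < kk x ∧ g^[i] x = w)).card :=
            (Finset.card_le_card hsub).trans Finset.card_biUnion_le
        _ ≤ ∑ _w ∈ N z, M^i := Finset.sum_le_sum fun w _ => ih w
        _ = (N z).card * M^i := by rw [Finset.sum_const, smul_eq_mul]
        _ ≤ M * M^i := Nat.mul_le_mul_right (M^i) (hNM z)
        _ = M^(i+1) := (pow_succ' M i).symm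
  set B := X0.filter (fun z => z ≠ x0star) with hB
  -- fiber mass bound
  have hfiber : ∀ i : ℕ, ∀ z : X, z ∈ B →
      ∑ x ∈ X0.filter (fun x => i < kk x ∧ g^[i] x = z), π x
        ≤ (M:ℝ)^i * ((ρ*M)⁻¹)^i * π z := by
    intro i z _
    have hb : ∀ x ∈ X0.filter (fun x => i < kk x ∧ g^[i] x = z),
        π x ≤ ((ρ*M)⁻¹)^i * π z := by
      intro x hx
      rcases Finset.mem_filter.mp hx with ⟨hx0, hik, hgz⟩
      have hgr := hgrow x hx0 i hik.le
      rw [hgz] at hgr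
      have hp : (0:ℝ) < (ρ*M)^i := pow_pos (by nlinarith) i
      rw [inv_pow, ← div_eq_inv_mul, le_div_iff₀ hp]
      nlinarith [hgr]
    have h1 := Finset.sum_le_card_nsmul (X0.filter (fun x => i < kk x ∧ g^[i] x = z)) π
      (((ρ*M)⁻¹)^i * π z) hb
    rw [nsmul_eq_mul] at h1
    have hcnn : (0:ℝ) ≤ ((ρ*M)⁻¹)^i * π z :=
      mul_nonneg (pow_nonneg (inv_nonneg.mpr (by nlinarith)) i) (hπpos z).le
    have h2 : (((X0.filter (fun x => i < kk x ∧ g^[i] x = z)).card : ℝ)) ≤ (M:ℝ)^i := by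
      exact_mod_cast hcard i z
    calc ∑ x ∈ X0.filter (fun x => i < kk x ∧ g^[i] x = z), π x
        ≤ ((X0.filter (fun x => i < kk x ∧ g^[i] x = z)).card : ℝ) * (((ρ*M)⁻¹)^i * π z) := h1
      _ ≤ (M:ℝ)^i * (((ρ*M)⁻¹)^i * π z) := mul_le_mul_of_nonneg_right h2 hcnn
      _ = (M:ℝ)^i * ((ρ*M)⁻¹)^i * π z := by ring
  -- the key inequality, for arbitrary f
  have key : ∀ f : X → ℝ,
      (1 - r)^2 * (∑ x ∈ X0, ∑ y ∈ X0, (f x - f y)^2 * π x * π y)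
        ≤ 4 * M * (∑ x ∈ X0, ∑ y ∈ X0, (f x - f y)^2 * lazyM (rwMH π N) x y * π x) := by
    intro f
    set L : Matrix X X ℝ := lazyM (rwMH π N) with hL
    set D := ∑ x ∈ X0, ∑ y ∈ X0, (f x - f y)^2 * L x y * π x with hD
    set V := ∑ x ∈ X0, ∑ y ∈ X0, (f x - f y)^2 * π x * π y with hV
    set S := ∑ x ∈ X0, (f x - f x0star)^2 * π x with hS
    set Q := ∑ z ∈ B, (f (g z) - f z)^2 * π z with hQ
    set T := ∑ x ∈ X0,
      (∑ i ∈ Finset.range (kk x), r⁻¹^i * (f (g^[i+1] x) - f (g^[i] x))^2) * π x with hT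
    have hSnn : 0 ≤ S :=
      Finset.sum_nonneg fun x _ => mul_nonneg (sq_nonneg _) (hπpos x).le
    have hQnn : 0 ≤ Q :=
      Finset.sum_nonneg fun z _ => mul_nonneg (sq_nonneg _) (hπpos z).le
    have hDnn : 0 ≤ D := Finset.sum_nonneg fun x _ => Finset.sum_nonneg fun y _ =>
      mul_nonneg (mul_nonneg (sq_nonneg _) (hlznn x y)) (hπpos x).le
    -- (1) V ≤ 2 S
    have hW1 : ∑ x ∈ X0, π x ≤ 1 := by
      rw [← hπsum]
      exact Finset.sum_le_sum_of_subset_of_nonneg (Finset.subset_univ X0)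
        fun i _ _ => (hπpos i).le
    have hswap : ∑ x ∈ X0, ∑ y ∈ X0, (f y - f x0star)^2 * π x * π y
        = ∑ x ∈ X0, ∑ y ∈ X0, (f x - f x0star)^2 * π x * π y := by
      rw [Finset.sum_comm]
      exact Finset.sum_congr rfl fun x _ => Finset.sum_congr rfl fun y _ => by ring
    have e1 : S * (∑ x ∈ X0, π x) = ∑ x ∈ X0, ∑ y ∈ X0, (f x - f x0star)^2 * π x * π y := by
      rw [hS, Finset.sum_mul_sum]
    have e2 : (∑ x ∈ X0, (f x - f x0star) * π x)^2
        = ∑ x ∈ X0, ∑ y ∈ X0, (f x - f x0star)*(f y - f x0star) * π x * π y := by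
      rw [sq, Finset.sum_mul_sum]
      exact Finset.sum_congr rfl fun x _ => Finset.sum_congr rfl fun y _ => by ring
    have comb : ∑ x ∈ X0, ∑ y ∈ X0,
        ((f x - f x0star)^2 * π x * π y + (f y - f x0star)^2 * π x * π y
          - 2 * ((f x - f x0star)*(f y - f x0star) * π x * π y)) = V :=
      Finset.sum_congr rfl fun x _ => Finset.sum_congr rfl fun y _ => by ring
    have split : ∑ x ∈ X0, ∑ y ∈ X0,
        ((f x - f x0star)^2 * π x * π y + (f y - f x0star)^2 * π x * π y
          - 2 * ((f x - f x0star)*(f y - f x0star) * π x * π y))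
        = (∑ x ∈ X0, ∑ y ∈ X0, (f x - f x0star)^2 * π x * π y)
          + (∑ x ∈ X0, ∑ y ∈ X0, (f y - f x0star)^2 * π x * π y)
          - 2 * (∑ x ∈ X0, ∑ y ∈ X0, (f x - f x0star)*(f y - f x0star) * π x * π y) := by
      simp only [Finset.sum_add_distrib, Finset.sum_sub_distrib, ← Finset.mul_sum]
    have hVeq : V = 2 * (S * (∑ x ∈ X0, π x)) - 2 * (∑ x ∈ X0, (f x - f x0star) * π x)^2 := by
      rw [← comb, split, hswap, ← e1, ← e2]; ring
    have hVS : V ≤ 2 * S := by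
      have hsq := sq_nonneg (∑ x ∈ X0, (f x - f x0star) * π x)
      nlinarith [hSnn, hW1]
    -- (2) Cauchy-Schwarz along paths
    have hCS : ∀ x ∈ X0, (f x - f x0star)^2
        ≤ (1-r)⁻¹ * ∑ i ∈ Finset.range (kk x), r⁻¹^i * (f (g^[i+1] x) - f (g^[i] x))^2 := by
      intro x hx
      have htel : ∑ i ∈ Finset.range (kk x), (f (g^[i+1] x) - f (g^[i] x))
          = f (g^[kk x] x) - f (g^[0] x) :=
        Finset.sum_range_sub (fun i => f (g^[i] x)) (kk x)
      have hsq : (f x - f x0star)^2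
          = (∑ i ∈ Finset.range (kk x), (f (g^[i+1] x) - f (g^[i] x)))^2 := by
        rw [htel, hk0 x hx, Function.iterate_zero_apply]; ring
      rw [hsq]
      set u : ℕ → ℝ := fun i => Real.sqrt r ^ i with hu
      have hune : ∀ i, u i ≠ 0 := fun i =>
        pow_ne_zero _ (Real.sqrt_ne_zero'.mpr hr0)
      have hCS0 := Finset.sum_mul_sq_le_sq_mul_sq (Finset.range (kk x)) u
        (fun i => (f (g^[i+1] x) - f (g^[i] x)) / u i)
      have hprod : ∑ i ∈ Finset.range (kk x), u i * ((f (g^[i+1] x) - f (g^[i] x)) / u i)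
          = ∑ i ∈ Finset.range (kk x), (f (g^[i+1] x) - f (g^[i] x)) :=
        Finset.sum_congr rfl fun i _ => mul_div_cancel₀ _ (hune i)
      have husq : ∑ i ∈ Finset.range (kk x), (u i)^2 = ∑ i ∈ Finset.range (kk x), r^i :=
        Finset.sum_congr rfl fun i _ => by
          rw [hu, ← pow_mul, mul_comm, pow_mul, Real.sq_sqrt hr0.le]
      have hvsq : ∑ i ∈ Finset.range (kk x), ((f (g^[i+1] x) - f (g^[i] x)) / u i)^2
          = ∑ i ∈ Finset.range (kk x), r⁻¹^i * (f (g^[i+1] x) - f (g^[i] x))^2 :=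
        Finset.sum_congr rfl fun i _ => by
          rw [div_pow, hu, ← pow_mul, mul_comm, pow_mul, Real.sq_sqrt hr0.le,
            div_eq_mul_inv, mul_comm, ← inv_pow]
      calc (∑ i ∈ Finset.range (kk x), (f (g^[i+1] x) - f (g^[i] x)))^2
          = (∑ i ∈ Finset.range (kk x), u i * ((f (g^[i+1] x) - f (g^[i] x)) / u i))^2 := by
            rw [hprod]
        _ ≤ (∑ i ∈ Finset.range (kk x), (u i)^2)
            * (∑ i ∈ Finset.range (kk x), ((f (g^[i+1] x) - f (g^[i] x)) / u i)^2) := hCS0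
        _ = (∑ i ∈ Finset.range (kk x), r^i)
            * (∑ i ∈ Finset.range (kk x), r⁻¹^i * (f (g^[i+1] x) - f (g^[i] x))^2) := by
            rw [husq, hvsq]
        _ ≤ (1-r)⁻¹ * (∑ i ∈ Finset.range (kk x), r⁻¹^i * (f (g^[i+1] x) - f (g^[i] x))^2) := by
            refine mul_le_mul_of_nonneg_right (hgeom (kk x)) ?_
            exact Finset.sum_nonneg fun i _ =>
              mul_nonneg (pow_nonneg (inv_nonneg.mpr hr0.le) i) (sq_nonneg _)
    -- (3) S ≤ (1-r)⁻¹ T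
    have hST : S ≤ (1-r)⁻¹ * T := by
      rw [hS, hT, Finset.mul_sum]
      refine Finset.sum_le_sum fun x hx => ?_
      have h := mul_le_mul_of_nonneg_right (hCS x hx) (hπpos x).le
      calc (f x - f x0star)^2 * π x
          ≤ ((1-r)⁻¹ * ∑ i ∈ Finset.range (kk x),
              r⁻¹^i * (f (g^[i+1] x) - f (g^[i] x))^2) * π x := h
        _ = (1-r)⁻¹ * ((∑ i ∈ Finset.range (kk x),
              r⁻¹^i * (f (g^[i+1] x) - f (g^[i] x))^2) * π x) := by ring
    -- (4) T ≤ (1-r)⁻¹ Q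
    have hTQ : T ≤ (1-r)⁻¹ * Q := by
      have hpad : T = ∑ x ∈ X0, ∑ i ∈ Finset.range K,
          (if i < kk x then r⁻¹^i * (f (g^[i+1] x) - f (g^[i] x))^2 * π x else 0) := by
        rw [hT]
        refine Finset.sum_congr rfl fun x hx => ?_
        rw [← Finset.sum_filter]
        have hfil : (Finset.range K).filter (fun i => i < kk x) = Finset.range (kk x) := by
          have := hkK x hx
          ext i
          simp only [Finset.mem_filter, Finset.mem_range]
          omega
        rw [hfil, Finset.sum_mul]
      rw [hpad, Finset.sum_comm]
      have hstep : ∀ i ∈ Finset.range K,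
          (∑ x ∈ X0, if i < kk x then r⁻¹^i * (f (g^[i+1] x) - f (g^[i] x))^2 * π x else 0)
            ≤ r^i * Q := by
        intro i _
        rw [← Finset.sum_filter]
        have hmaps : ∀ x ∈ X0.filter (fun x => i < kk x), g^[i] x ∈ B := by
          intro x hx
          rcases Finset.mem_filter.mp hx with ⟨hx0, hik⟩
          exact Finset.mem_filter.mpr ⟨hpath x hx0 i hik.le, hkmin x hx0 i hik⟩
        rw [← Finset.sum_fiberwise_of_maps_to hmaps
          (fun x => r⁻¹^i * (f (g^[i+1] x) - f (g^[i] x))^2 * π x)]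
        rw [show r^i * Q = ∑ z ∈ B, r^i * ((f (g z) - f z)^2 * π z) by
          rw [hQ, Finset.mul_sum]]
        refine Finset.sum_le_sum fun z hz => ?_
        have hfibeq : ∀ x ∈ (X0.filter (fun x => i < kk x)).filter (fun x => g^[i] x = z),
            r⁻¹^i * (f (g^[i+1] x) - f (g^[i] x))^2 * π x
              = r⁻¹^i * (f (g z) - f z)^2 * π x := by
          intro x hx
          rcases Finset.mem_filter.mp hx with ⟨_, hgz⟩
          rw [Function.iterate_succ_apply', hgz]
        rw [Finset.sum_congr rfl hfibeq, ← Finset.mul_sum, Finset.filter_filter]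
        have hfib := hfiber i z hz
        have hcnn : (0:ℝ) ≤ r⁻¹^i * (f (g z) - f z)^2 :=
          mul_nonneg (pow_nonneg (inv_nonneg.mpr hr0.le) i) (sq_nonneg _)
        calc r⁻¹^i * (f (g z) - f z)^2
              * (∑ x ∈ X0.filter (fun x => i < kk x ∧ g^[i] x = z), π x)
            ≤ r⁻¹^i * (f (g z) - f z)^2 * ((M:ℝ)^i * ((ρ*M)⁻¹)^i * π z) :=
              mul_le_mul_of_nonneg_left hfib hcnn
          _ = r^i * ((f (g z) - f z)^2 * π z) := by
              linear_combination (f (g z) - f z)^2 * π z * hscal i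
      calc ∑ i ∈ Finset.range K, ∑ x ∈ X0,
            (if i < kk x then r⁻¹^i * (f (g^[i+1] x) - f (g^[i] x))^2 * π x else 0)
          ≤ ∑ i ∈ Finset.range K, r^i * Q := Finset.sum_le_sum hstep
        _ = (∑ i ∈ Finset.range K, r^i) * Q := by rw [Finset.sum_mul]
        _ ≤ (1-r)⁻¹ * Q := mul_le_mul_of_nonneg_right (hgeom K) hQnn
    -- (5) Q ≤ 2 M D
    have hQD : Q ≤ 2*M*D := by
      have h1 : ∀ z ∈ B, (f (g z) - f z)^2 * π z
          ≤ 2*M*((f z - f (g z))^2 * L z (g z) * π z) := by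
        intro z hz
        rcases Finset.mem_filter.mp hz with ⟨hz0, hzne⟩
        have he := hedge z hz0 hzne
        have h2M : (0:ℝ) < 2*M := by linarith
        have h2ML : 1 ≤ 2*(M:ℝ) * L z (g z) := by
          have := mul_le_mul_of_nonneg_left he h2M.le
          rwa [mul_inv_cancel₀ h2M.ne'] at this
        nlinarith [mul_le_mul_of_nonneg_left h2ML
          (mul_nonneg (sq_nonneg (f z - f (g z))) (hπpos z).le)]
      calc Q ≤ ∑ z ∈ B, 2*M*((f z - f (g z))^2 * L z (g z) * π z) :=
            Finset.sum_le_sum h1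
        _ = 2*M*(∑ z ∈ B, (f z - f (g z))^2 * L z (g z) * π z) := by
            rw [Finset.mul_sum]
        _ ≤ 2*M*D := by
            refine mul_le_mul_of_nonneg_left ?_ (by linarith)
            have tnn : ∀ z y, 0 ≤ (f z - f y)^2 * L z y * π z := fun z y =>
              mul_nonneg (mul_nonneg (sq_nonneg _) (hlznn z y)) (hπpos z).le
            calc ∑ z ∈ B, (f z - f (g z))^2 * L z (g z) * π z
                ≤ ∑ z ∈ B, ∑ y ∈ X0, (f z - f y)^2 * L z y * π z := by
                  refine Finset.sum_le_sum fun z hz => ?_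
                  rcases Finset.mem_filter.mp hz with ⟨hz0, hzne⟩
                  exact Finset.single_le_sum (fun y _ => tnn z y) (hg z ⟨hz0, hzne⟩).2.1
              _ ≤ D := Finset.sum_le_sum_of_subset_of_nonneg (Finset.filter_subset _ _)
                  (fun x _ _ => Finset.sum_nonneg fun y _ => tnn x y)
    -- chain
    have hTnn : 0 ≤ T := Finset.sum_nonneg fun x _ =>
      mul_nonneg (Finset.sum_nonneg fun i _ =>
        mul_nonneg (pow_nonneg (inv_nonneg.mpr hr0.le) i) (sq_nonneg _)) (hπpos x).le
    have hchain : V ≤ 2*((1-r)⁻¹ * ((1-r)⁻¹ * (2*M*D))) := by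
      have c2 : T ≤ (1-r)⁻¹ * (2*M*D) :=
        hTQ.trans (mul_le_mul_of_nonneg_left hQD (inv_nonneg.mpr h1r.le))
      have c1 : S ≤ (1-r)⁻¹ * ((1-r)⁻¹ * (2*M*D)) :=
        hST.trans (mul_le_mul_of_nonneg_left c2 (inv_nonneg.mpr h1r.le))
      linarith [hVS]
    calc (1-r)^2 * V ≤ (1-r)^2 * (2*((1-r)⁻¹ * ((1-r)⁻¹ * (2*M*D)))) :=
          mul_le_mul_of_nonneg_left hchain (by positivity)
      _ = 4*M*D := by field_simp; ring
  -- final assembly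
  have hcF : cFun ρ = 4/(1-r)^3 := by rw [cFun, ← hrdef]
  have hcFpos : 0 < cFun ρ * M := by
    rw [hcF]
    exact mul_pos (div_pos (by norm_num) (pow_pos h1r 3)) hMpos
  rw [restGap]
  apply le_csInf
  · obtain ⟨x1, hx1, hx1ne⟩ := hSne
    refine ⟨_, ⟨fun y => if y = x0star then (1:ℝ) else 0, ?_, rfl⟩⟩
    refine Finset.sum_pos' (fun x _ => Finset.sum_nonneg fun y _ =>
      mul_nonneg (mul_nonneg (sq_nonneg _) (hπpos _).le) (hπpos _).le) ⟨x1, hx1, ?_⟩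
    refine Finset.sum_pos' (fun y _ =>
      mul_nonneg (mul_nonneg (sq_nonneg _) (hπpos _).le) (hπpos _).le) ⟨x0star, hx0star, ?_⟩
    have h1 := hπpos x1
    have h2 := hπpos x0star
    simp only [if_pos rfl, if_neg hx1ne, if_true]
    nlinarith
  · rintro t ⟨f, hVpos, rfl⟩
    have hkey := key f
    set D := ∑ x ∈ X0, ∑ y ∈ X0, (f x - f y)^2 * lazyM (rwMH π N) x y * π x with hDd
    set V := ∑ x ∈ X0, ∑ y ∈ X0, (f x - f y)^2 * π x * π y with hVd
    have hDnn : 0 ≤ D := Finset.sum_nonneg fun x _ => Finset.sum_nonneg fun y _ =>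
      mul_nonneg (mul_nonneg (sq_nonneg _) (hlznn x y)) (hπpos x).le
    rw [div_le_div_iff₀ hcFpos hVpos, hcF, one_mul]
    have h3 : (1-r)^3*V ≤ 4*M*D := by
      nlinarith [mul_le_mul_of_nonneg_left hkey h1r.le,
        mul_nonneg (mul_nonneg hr0.le hMpos.le) hDnn]
    have h1r3 : 0 < (1-r)^3 := pow_pos h1r 3
    rw [show D * (4/(1-r)^3 * M) = (4*M*D)/(1-r)^3 by field_simp]
    rw [le_div_iff₀ h1r3]
    nlinarith [h3]
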